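/- Let V be a real inner product space and let ᾱ₁, α₂, ᾱ₃, α₄, β₁, β₂, β₃ ∈ V satisfy: ⟪β₁,β₁⟫ = ⟪ᾱ₁,ᾱ₁⟫ = ⟪α₂,α₂⟫ = ⟪ᾱ₃,ᾱ₃⟫ = 2; ⟪β₁,ᾱ₁⟫ = ⟪β₁,α₂⟫ = ⟪β₁,ᾱ₃⟫ = −1 and ⟪ᾱ₁,α₂⟫ = ⟪ᾱ₁,ᾱ₃⟫ = ⟪α₂,ᾱ₃⟫ = 0; ⟪α₂,β₃⟫ + ⟪ᾱ₃,β₃⟫ = 0 and ⟪ᾱ₁,β₃⟫ = ⟪β₁,β₃⟫ = 0; ⟪ᾱ₁,β₂⟫ + ⟪α₂,β₂⟫ = 0 and ⟪ᾱ₃,β₂⟫ = ⟪β₁,β₂⟫ = 0; α₄ is orthogonal to each of ᾱ₁, α₂, ᾱ₃, β₁ (the relevant Gram relations of the Carter diagram E₇(a₄)). Set α₁ := −(2β₁ + ᾱ₁ + α₂ + ᾱ₃). Then ⟪α₁,α₁⟫ = 2, ⟪α₁,β₁⟫ = −1, and α₁ is orthogonal to each of α₂, ᾱ₃, α₄, β₂,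 β₃ (the Gram relations of the Carter diagram E₇(a₃)). -/
import Mathlib

open scoped RealInnerProductSpace


theorem stmt7 {V : Type*} [NormedAddCommGroup V] [InnerProductSpace ℝ V]
    (αb₁ α₂ αb₃ α₄ β₁ β₂ β₃ : V)
    (h0 : ⟪β₁, β₁⟫ = 2)
    (h1 : ⟪αb₁, αb₁⟫ = 2)
    (h2 : ⟪α₂, α₂⟫ = 2)
    (h3 : ⟪αb₃, αb₃⟫ = 2)
    (h4 : ⟪β₁, αb₁⟫ = -1)
    (h5 : ⟪β₁, α₂⟫ = -1)
    (h6 : ⟪β₁, αb₃⟫ = -1)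
    (h7 : ⟪αb₁, α₂⟫ = 0)
    (h8 : ⟪αb₁, αb₃⟫ = 0)
    (h9 : ⟪α₂, αb₃⟫ = 0)
    (h10 : ⟪α₂, β₃⟫ + ⟪αb₃, β₃⟫ = 0)
    (h11 : ⟪αb₁, β₃⟫ = 0)
    (h12 : ⟪β₁, β₃⟫ = 0)
    (h13 : ⟪αb₁, β₂⟫ + ⟪α₂, β₂⟫ = 0)
    (h14 : ⟪αb₃, β₂⟫ = 0)
    (h15 : ⟪β₁, β₂⟫ = 0)
    (h16 : ⟪α₄, αb₁⟫ = 0)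
    (h17 : ⟪α₄, α₂⟫ = 0)
    (h18 : ⟪α₄, αb₃⟫ = 0)
    (h19 : ⟪α₄, β₁⟫ = 0)
    (α₁ : V) (hdef : α₁ = -((2:ℝ) • β₁ + αb₁ + α₂ + αb₃)) :
    ⟪α₁, α₁⟫ = 2 ∧
    ⟪α₁, β₁⟫ = -1 ∧
    ⟪α₁, α₂⟫ = 0 ∧
    ⟪α₁, αb₃⟫ = 0 ∧
    ⟪α₁, α₄⟫ = 0 ∧
    ⟪α₁, β₂⟫ = 0 ∧
    ⟪α₁, β₃⟫ = 0 := by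
  have sym : ∀ x y : V, ⟪x, y⟫ = ⟪y, x⟫ := fun x y => real_inner_comm y x
  subst hdef
  refine ⟨?_, ?_, ?_, ?_, ?_, ?_, ?_⟩ <;>
    simp only [inner_neg_neg, inner_neg_left, inner_neg_right, inner_add_left, inner_add_right,
      real_inner_smul_left, real_inner_smul_right,
      sym αb₁ β₁, sym α₂ β₁, sym αb₃ β₁, sym α₂ αb₁, sym αb₃ αb₁, sym αb₃ α₂,
      sym αb₁ α₄, sym α₂ α₄, sym αb₃ α₄, sym β₁ α₄,
      h0, h1, h2, h3, h4, h5, h6, h7, h8, h9, h11, h12, h14, h15, h16, h17, h18, h19] <;>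
    linarith
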